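/- For every natural number n ≥ 3, the minimal polynomial over ℂ of the 2^n-point discrete Fourier transform matrix F_{2^n} equals X⁴ − 1. -/

import Mathlib

open Matrix Polynomial

/-- The N-point discrete Fourier transform matrix, with entries
N^{−1/2}·exp(−2πi·kℓ/N). -/
noncomputable def dft (N : ℕ) : Matrix (Fin N) (Fin N) ℂ :=
  fun k l =>
    ((Real.sqrt N : ℝ) : ℂ)⁻¹ *
      Complex.exp (-(2 * Real.pi * Complex.I * (k : ℕ) * (l : ℕ)) / N)

section aux
variable (N : ℕ) (hN : 8 ≤ N)

noncomputable def dftω (N : ℕ) : ℂ := (Complex.exp (2 * Real.pi * Complex.I / N))⁻¹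

lemma dft_apply_eq (k l : Fin N) (hN : 8 ≤ N) :
    dft N k l = ((Real.sqrt N : ℝ) : ℂ)⁻¹ * dftω N ^ ((k : ℕ) * (l : ℕ)) := by
  have hN0 : (N : ℂ) ≠ 0 := Nat.cast_ne_zero.mpr (by omega)
  rw [dft, dftω, ← Complex.exp_neg, ← Complex.exp_nat_mul]
  congr 1
  field_simp
  congr 1
  push_cast
  ring

lemma dftω_prim (hN : 8 ≤ N) : IsPrimitiveRoot (dftω N) N := by
  have h := Complex.isPrimitiveRoot_exp N (by omega)
  exact h.inv

end aux

section aux2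
variable (N : ℕ)

lemma dft_sq (hN : 8 ≤ N) : dft N * dft N =
    Matrix.of (fun k l : Fin N => if k = -l then (1:ℂ) else 0) := by
  have hω := dftω_prim N hN
  ext k l
  rw [Matrix.mul_apply]
  set c : ℂ := ((Real.sqrt N : ℝ) : ℂ)⁻¹ with hc
  have hsum : ∀ j : Fin N, dft N k j * dft N j l
      = c^2 * (dftω N ^ ((k:ℕ)+(l:ℕ)))^(j:ℕ) := by
    intro j
    rw [dft_apply_eq N k j hN, dft_apply_eq N j l hN, ← pow_mul,
      show ((k:ℕ)+(l:ℕ))*(j:ℕ) = (k:ℕ)*(j:ℕ) + (j:ℕ)*(l:ℕ) by ring, pow_add]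
    ring
  rw [Finset.sum_congr rfl (fun j _ => hsum j), ← Finset.mul_sum]
  set z := dftω N ^ ((k:ℕ)+(l:ℕ)) with hzdef
  have hdvd : (k = -l) ↔ N ∣ ((k:ℕ)+(l:ℕ)) := by
    have h1 := k.isLt
    have h2 := l.isLt
    have hiff2 : N ∣ ((k:ℕ)+(l:ℕ)) ↔ ((k:ℕ)+(l:ℕ) = 0 ∨ (k:ℕ)+(l:ℕ) = N) := by
      constructor
      · intro h
        rcases Nat.lt_or_ge ((k:ℕ)+(l:ℕ)) N with hlt | hge
        · left; exact Nat.eq_zero_of_dvd_of_lt h hlt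
        · right
          rcases h with ⟨m, hm⟩
          rcases m with _ | _ | m
          · omega
          · omega
          · exfalso
            have hle : N * 2 ≤ N * (m + 1 + 1) := Nat.mul_le_mul_left N (by omega)
            omega
      · rintro (h | h) <;> simp [h]
    rw [Fin.ext_iff, Fin.coe_neg, hiff2]
    rcases Nat.eq_zero_or_pos (l : ℕ) with h0 | h0
    · rw [h0, Nat.sub_zero, Nat.mod_self]; omega
    · rw [Nat.mod_eq_of_lt (by omega)]; omega
  have hzone : z = 1 ↔ N ∣ ((k:ℕ)+(l:ℕ)) := hω.pow_eq_one_iff_dvd _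
  by_cases hz : k = -l
  · have hz1 : z = 1 := hzone.mpr (hdvd.mp hz)
    have hNR : (0:ℝ) < N := by positivity
    have hNc : c^2 * (N:ℂ) = 1 := by
      rw [hc, ← Complex.ofReal_inv, ← Complex.ofReal_pow, ← Complex.ofReal_natCast,
        ← Complex.ofReal_mul, ← Complex.ofReal_one, Complex.ofReal_inj,
        inv_pow, Real.sq_sqrt hNR.le]
      field_simp
    simp only [hz1, one_pow, Finset.sum_const, Finset.card_univ, Fintype.card_fin,
      nsmul_eq_mul, mul_one, Matrix.of_apply, if_pos hz]
    linear_combination hNc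
  · have hz1 : z ≠ 1 := fun h => hz (hdvd.mpr (hzone.mp h))
    have hzN : z^N = 1 := by
      rw [hzdef, ← pow_mul, mul_comm, pow_mul, hω.pow_eq_one, one_pow]
    rw [Fin.sum_univ_eq_sum_range (fun j => z^j) N, geom_sum_eq hz1, hzN]
    simp [Matrix.of_apply, if_neg hz]

end aux2

noncomputable def Rmat (N : ℕ) : Matrix (Fin N) (Fin N) ℂ :=
  Matrix.of (fun k l : Fin N => if k = -l then (1:ℂ) else 0)

section aux3
variable (N : ℕ)

lemma Rmat_sq (hN : 8 ≤ N) : Rmat N * Rmat N = 1 := by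
  haveI : NeZero N := ⟨by omega⟩
  ext k l
  rw [Matrix.mul_apply]
  have h : ∀ j : Fin N, Rmat N k j * Rmat N j l
      = if j = -l then (if k = -j then (1:ℂ) else 0) else 0 := by
    intro j; simp only [Rmat, Matrix.of_apply]; split <;> simp
  rw [Finset.sum_congr rfl (fun j _ => h j),
    Finset.sum_ite_eq' Finset.univ (-l) (fun j => if k = -j then (1:ℂ) else 0)]
  simp [Matrix.one_apply, neg_neg]

lemma dft_pow2 (hN : 8 ≤ N) : dft N ^ 2 = Rmat N := by
  rw [pow_two]; exact dft_sq N hN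

lemma dft_pow4 (hN : 8 ≤ N) : dft N ^ 4 = 1 := by
  have h : dft N ^ 4 = (dft N ^ 2) * (dft N ^ 2) := by
    rw [← pow_add]
  rw [h, dft_pow2 N hN, Rmat_sq N hN]

lemma dft_pow3_apply (hN : 8 ≤ N) (k l : Fin N) :
    (dft N ^ 3) k l = dft N k (-l) := by
  haveI : NeZero N := ⟨by omega⟩
  have h : dft N ^ 3 = dft N * Rmat N := by
    rw [← dft_pow2 N hN, ← pow_succ']
  rw [h, Matrix.mul_apply]
  have h2 : ∀ j : Fin N, dft N k j * Rmat N j l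
      = if j = -l then dft N k j else 0 := by
    intro j; simp only [Rmat, Matrix.of_apply, mul_ite, mul_one, mul_zero]
  rw [Finset.sum_congr rfl (fun j _ => h2 j),
    Finset.sum_ite_eq' Finset.univ (-l) (fun j => dft N k j)]
  simp

end aux3

open Complex in
noncomputable def qpoly (lam : ℂ) : ℂ[X] := X^3 + C lam * X^2 + (C lam)^2 * X + (C lam)^3

lemma qpoly_factor (lam : ℂ) (h4 : lam^4 = 1) :
    (X - C lam) * qpoly lam = X^4 - 1 := by
  have h : (X - C lam) * qpoly lam = X^4 - (C lam)^4 := by rw [qpoly]; ring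
  rw [h, ← C_pow, h4, C_1]

lemma qaeval {m : Type*} [Fintype m] [DecidableEq m] (F : Matrix m m ℂ) (lam : ℂ) :
    aeval F (qpoly lam) = F^3 + lam • F^2 + lam^2 • F + lam^3 • 1 := by
  simp [qpoly, Algebra.algebraMap_eq_smul_one, smul_mul_assoc, _root_.smul_pow, smul_smul, pow_succ]
  ring_nf

section aux4
variable (N : ℕ) [NeZero N]

lemma entry00 (hN : 8 ≤ N) : dft N 0 0 = ((Real.sqrt N:ℝ):ℂ)⁻¹ := by
  rw [dft_apply_eq N 0 0 hN]
  simp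

lemma entry11 (hN : 8 ≤ N) : dft N 1 1 = ((Real.sqrt N:ℝ):ℂ)⁻¹ * dftω N := by
  rw [dft_apply_eq N 1 1 hN]
  have h1 : ((1 : Fin N) : ℕ) = 1 := by
    rw [Fin.val_one', Nat.mod_eq_of_lt (by omega)]
  rw [h1]
  norm_num

lemma val_neg_one (hN : 8 ≤ N) : ((-1 : Fin N) : ℕ) = N - 1 := by
  have h1 : ((1 : Fin N) : ℕ) = 1 := by rw [Fin.val_one', Nat.mod_eq_of_lt (by omega)]
  rw [Fin.coe_neg, h1, Nat.mod_eq_of_lt (by omega)]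

lemma entry1neg1 (hN : 8 ≤ N) :
    dft N 1 (-1) = ((Real.sqrt N:ℝ):ℂ)⁻¹ * Complex.exp (2*Real.pi*Complex.I/N) := by
  have h1 : ((1 : Fin N) : ℕ) = 1 := by rw [Fin.val_one', Nat.mod_eq_of_lt (by omega)]
  rw [dft_apply_eq N 1 (-1) hN, h1, val_neg_one N hN, one_mul]
  congr 1
  -- dftω N ^ (N-1) = exp(2πi/N)
  have hω := dftω_prim N hN
  have hmul : dftω N ^ (N-1) * dftω N = 1 := by
    rw [← pow_succ, show N - 1 + 1 = N by omega, hω.pow_eq_one]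
  rw [eq_inv_of_mul_eq_one_left hmul, dftω, inv_inv]

end aux4

section aux5
variable (N : ℕ) [NeZero N]

lemma Rentry00 : Rmat N 0 0 = 1 := by simp [Rmat]

lemma Rentry1neg1 : Rmat N 1 (-1) = 1 := by simp [Rmat]

lemma one_ne_negone (hN : 8 ≤ N) : (1 : Fin N) ≠ (-1 : Fin N) := by
  intro h
  have h1 : ((1 : Fin N) : ℕ) = 1 := by rw [Fin.val_one', Nat.mod_eq_of_lt (by omega)]
  have h2 := val_neg_one N hN
  rw [Fin.ext_iff, h1, h2] at h
  omega

lemma sqrtN_gt_two (hN : 8 ≤ N) : 2 < Real.sqrt N := by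
  have hN' : (8:ℝ) ≤ (N:ℝ) := by exact_mod_cast hN
  rw [show (2:ℝ) = Real.sqrt 4 by
    rw [show (4:ℝ) = 2^2 by norm_num, Real.sqrt_sq (by norm_num)]]
  apply Real.sqrt_lt_sqrt (by norm_num)
  linarith

lemma q_one_ne (hN : 8 ≤ N) : aeval (dft N) (qpoly 1) ≠ 0 := by
  intro h
  have h00 : (aeval (dft N) (qpoly 1)) 0 0 = 0 := by rw [h]; simp
  rw [qaeval] at h00
  simp only [Matrix.add_apply, Matrix.smul_apply, smul_eq_mul] at h00
  rw [dft_pow3_apply N hN, dft_pow2 N hN, neg_zero, entry00 N hN, Rentry00,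
    Matrix.one_apply_eq] at h00
  rw [← Complex.ofReal_inv] at h00
  have hs := sqrtN_gt_two N hN
  have : ((Real.sqrt N)⁻¹ : ℝ) > 0 := by positivity
  norm_num at h00
  norm_cast at h00
  linarith

end aux5

section aux6
variable (N : ℕ) [NeZero N]

lemma q_negone_ne (hN : 8 ≤ N) : aeval (dft N) (qpoly (-1)) ≠ 0 := by
  intro h
  have h00 : (aeval (dft N) (qpoly (-1))) 0 0 = 0 := by rw [h]; simp
  rw [qaeval] at h00
  simp only [Matrix.add_apply, Matrix.smul_apply, smul_eq_mul] at h00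
  rw [dft_pow3_apply N hN, dft_pow2 N hN, neg_zero, entry00 N hN, Rentry00,
    Matrix.one_apply_eq] at h00
  have hs := sqrtN_gt_two N hN
  have h1 : ((Real.sqrt N)⁻¹ : ℝ) < 1 := by
    rw [inv_lt_one_iff₀]; right; linarith
  have hdiv : Real.sqrt N / (N:ℝ) = (Real.sqrt N)⁻¹ := by
    rw [show ((N:ℝ)) = Real.sqrt N * Real.sqrt N from (Real.mul_self_sqrt (by positivity)).symm]
    field_simp
    rw [Real.sqrt_sq (Real.sqrt_nonneg _)]
  rw [← Complex.ofReal_inv, Complex.ext_iff] at h00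
  norm_num [hdiv] at h00
  linarith [h00]

lemma Eexp_eq (hN : 8 ≤ N) : Complex.exp (2*Real.pi*Complex.I/N)
    = ((Real.cos (2*Real.pi/N) : ℝ) : ℂ) + ((Real.sin (2*Real.pi/N) : ℝ) : ℂ) * Complex.I := by
  have h : (2*Real.pi*Complex.I/N : ℂ) = ((2*Real.pi/N : ℝ) : ℂ) * Complex.I := by
    push_cast; ring
  rw [h, Complex.exp_mul_I, Complex.ofReal_cos, Complex.ofReal_sin]

lemma dftω_eq (hN : 8 ≤ N) : dftω N
    = ((Real.cos (2*Real.pi/N) : ℝ) : ℂ) - ((Real.sin (2*Real.pi/N) : ℝ) : ℂ) * Complex.I := by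
  rw [dftω, ← Complex.exp_neg]
  have h : (-(2*Real.pi*Complex.I/N) : ℂ) = ((-(2*Real.pi/N) : ℝ) : ℂ) * Complex.I := by
    push_cast; ring
  rw [h, Complex.exp_mul_I, Complex.ofReal_neg, Complex.cos_neg, Complex.sin_neg,
    Complex.ofReal_cos, Complex.ofReal_sin]
  ring

lemma sin_theta_bounds (hN : 8 ≤ N) :
    0 ≤ Real.sin (2*Real.pi/N) ∧ Real.sin (2*Real.pi/N) ≤ 1 := by
  have hN' : (8:ℝ) ≤ (N:ℝ) := by exact_mod_cast hN
  have hpi := Real.pi_pos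
  constructor
  · apply Real.sin_nonneg_of_nonneg_of_le_pi
    · positivity
    · rw [div_le_iff₀ (by linarith)]
      nlinarith
  · exact Real.sin_le_one _

lemma q_I_ne (hN : 8 ≤ N) : aeval (dft N) (qpoly Complex.I) ≠ 0 := by
  intro h
  have h00 : (aeval (dft N) (qpoly Complex.I)) 1 (-1) = 0 := by rw [h]; simp
  rw [qaeval] at h00
  simp only [Matrix.add_apply, Matrix.smul_apply, smul_eq_mul] at h00
  rw [dft_pow3_apply N hN, dft_pow2 N hN, neg_neg, entry11 N hN, Rentry1neg1,
    Matrix.one_apply_ne (one_ne_negone N hN), entry1neg1 N hN, Eexp_eq N hN,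
    dftω_eq N hN] at h00
  obtain ⟨hs0, hs1⟩ := sin_theta_bounds N hN
  have hs := sqrtN_gt_two N hN
  have hpos : (0:ℝ) < Real.sqrt N := by linarith
  have hinv : ((Real.sqrt N)⁻¹ : ℝ) < 1/2 := by
    rw [inv_lt_comm₀ hpos (by norm_num)]; linarith
  have hinv0 : (0:ℝ) < (Real.sqrt N)⁻¹ := by positivity
  rw [← Complex.ofReal_inv, Complex.ext_iff] at h00
  simp only [neg_sq, Complex.I_sq, Complex.add_re, Complex.add_im, Complex.mul_re, Complex.mul_im,
    Complex.I_re, Complex.I_im, Complex.ofReal_re, Complex.ofReal_im,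
    Complex.sub_re, Complex.sub_im, Complex.neg_re, Complex.neg_im,
    Complex.one_re, Complex.one_im, Complex.zero_re, Complex.zero_im,
    mul_zero, mul_one, zero_mul, one_mul, sub_zero, zero_sub, add_zero, zero_add,
    neg_zero, neg_neg] at h00
  have hdiv : Real.sqrt N / (N:ℝ) = (Real.sqrt N)⁻¹ := by
    rw [show ((N:ℝ)) = Real.sqrt N * Real.sqrt N from (Real.mul_self_sqrt (by positivity)).symm]
    field_simp
    rw [Real.sqrt_sq (Real.sqrt_nonneg _)]
  nlinarith [h00.2]

lemma q_negI_ne (hN : 8 ≤ N) : aeval (dft N) (qpoly (-Complex.I)) ≠ 0 := by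
  intro h
  have h00 : (aeval (dft N) (qpoly (-Complex.I))) 1 (-1) = 0 := by rw [h]; simp
  rw [qaeval] at h00
  simp only [Matrix.add_apply, Matrix.smul_apply, smul_eq_mul] at h00
  rw [dft_pow3_apply N hN, dft_pow2 N hN, neg_neg, entry11 N hN, Rentry1neg1,
    Matrix.one_apply_ne (one_ne_negone N hN), entry1neg1 N hN, Eexp_eq N hN,
    dftω_eq N hN] at h00
  obtain ⟨hs0, hs1⟩ := sin_theta_bounds N hN
  have hs := sqrtN_gt_two N hN
  have hpos : (0:ℝ) < Real.sqrt N := by linarith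
  have hinv0 : (0:ℝ) < (Real.sqrt N)⁻¹ := by positivity
  rw [← Complex.ofReal_inv, Complex.ext_iff] at h00
  simp only [neg_sq, Complex.I_sq, Complex.add_re, Complex.add_im, Complex.mul_re, Complex.mul_im,
    Complex.I_re, Complex.I_im, Complex.ofReal_re, Complex.ofReal_im,
    Complex.sub_re, Complex.sub_im, Complex.neg_re, Complex.neg_im,
    Complex.one_re, Complex.one_im, Complex.zero_re, Complex.zero_im,
    mul_zero, mul_one, zero_mul, one_mul, sub_zero, zero_sub, add_zero, zero_add,
    neg_zero, neg_neg] at h00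
  have hdiv : Real.sqrt N / (N:ℝ) = (Real.sqrt N)⁻¹ := by
    rw [show ((N:ℝ)) = Real.sqrt N * Real.sqrt N from (Real.mul_self_sqrt (by positivity)).symm]
    field_simp
    rw [Real.sqrt_sq (Real.sqrt_nonneg _)]
  nlinarith [h00.2]

end aux6

theorem minpoly_dft (N : ℕ) (hN : 8 ≤ N) : minpoly ℂ (dft N) = X ^ 4 - 1 := by
  haveI : NeZero N := ⟨by omega⟩
  have h4 : dft N ^ 4 = 1 := dft_pow4 N hN
  have haevP : aeval (dft N) ((X:ℂ[X])^4 - 1) = 0 := by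
    simp [map_sub, map_pow, aeval_X, h4]
  have hmon : ((X:ℂ[X])^4 - 1).Monic := by
    rw [← C_1]; exact monic_X_pow_sub_C _ (by norm_num)
  have hint : IsIntegral ℂ (dft N) := ⟨(X:ℂ[X])^4 - 1, hmon, haevP⟩
  have hdvd : minpoly ℂ (dft N) ∣ (X:ℂ[X])^4 - 1 := minpoly.dvd ℂ (dft N) haevP
  have hroot : ∀ lam : ℂ, lam^4 = 1 → aeval (dft N) (qpoly lam) ≠ 0 →
      (X - C lam) ∣ minpoly ℂ (dft N) := by
    intro lam h4l hne
    rw [Polynomial.dvd_iff_isRoot]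
    by_contra hr
    have hnd : ¬ (X - C lam) ∣ minpoly ℂ (dft N) :=
      fun hd => hr (Polynomial.dvd_iff_isRoot.mp hd)
    have hcop : IsCoprime (X - C lam) (minpoly ℂ (dft N)) :=
      ((Polynomial.irreducible_X_sub_C lam).coprime_iff_not_dvd).mpr hnd
    have hpd : minpoly ℂ (dft N) ∣ (X - C lam) * qpoly lam := by
      rw [qpoly_factor lam h4l]; exact hdvd
    have hq : minpoly ℂ (dft N) ∣ qpoly lam := hcop.symm.dvd_of_dvd_mul_left hpd
    obtain ⟨r, hr2⟩ := hq
    apply hne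
    rw [hr2, _root_.map_mul, minpoly.aeval, zero_mul]
  have hd1 := hroot 1 (by norm_num) (q_one_ne N hN)
  have hd2 := hroot (-1) (by norm_num) (q_negone_ne N hN)
  have hI4 : Complex.I ^ 4 = 1 := by
    rw [show (4:ℕ) = 2*2 from rfl, pow_mul, Complex.I_sq]; norm_num
  have hd3 := hroot Complex.I hI4 (q_I_ne N hN)
  have hnegI4 : (-Complex.I) ^ 4 = 1 := by
    rw [show (4:ℕ) = 2*2 from rfl, pow_mul, neg_sq, Complex.I_sq]
    norm_num
  have hd4 := hroot (-Complex.I) hnegI4 (q_negI_ne N hN)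
  have hu : ∀ a b : ℂ, a ≠ b → IsCoprime (X - C a) (X - C b) := fun a b hab =>
    Polynomial.isCoprime_X_sub_C_of_isUnit_sub ((sub_ne_zero.mpr hab).isUnit)
  have h12 : (X - C 1) * (X - C (-1)) ∣ minpoly ℂ (dft N) :=
    (hu 1 (-1) (by norm_num)).mul_dvd hd1 hd2
  have hc3 : IsCoprime ((X - C 1) * (X - C (-1))) (X - C Complex.I) :=
    IsCoprime.mul_left (hu 1 Complex.I (by norm_num [Complex.ext_iff]))
      (hu (-1) Complex.I (by norm_num [Complex.ext_iff]))
  have h123 : ((X - C 1) * (X - C (-1))) * (X - C Complex.I) ∣ minpoly ℂ (dft N) :=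
    hc3.mul_dvd h12 hd3
  have hc4 : IsCoprime (((X - C 1) * (X - C (-1))) * (X - C Complex.I)) (X - C (-Complex.I)) :=
    IsCoprime.mul_left
      (IsCoprime.mul_left (hu 1 (-Complex.I) (by norm_num [Complex.ext_iff]))
        (hu (-1) (-Complex.I) (by norm_num [Complex.ext_iff])))
      (hu Complex.I (-Complex.I) (by norm_num [Complex.ext_iff]))
  have h1234 : (((X - C 1) * (X - C (-1))) * (X - C Complex.I)) * (X - C (-Complex.I))
      ∣ minpoly ℂ (dft N) := hc4.mul_dvd h123 hd4
  have hIc : (C Complex.I : ℂ[X])^2 = -1 := by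
    rw [← C_pow, Complex.I_sq, map_neg, C_1]
  have e1 : (X - C (1:ℂ)) * (X - C (-1)) = X^2 - 1 := by
    rw [C_1, map_neg, C_1]; ring
  have e2 : (X - C Complex.I) * (X - C (-Complex.I)) = X^2 + 1 := by
    rw [map_neg, sub_neg_eq_add,
      show (X - C Complex.I) * (X + C Complex.I) = X^2 - (C Complex.I)^2 from by ring,
      hIc, sub_neg_eq_add]
  have hP'eq : (((X - C (1:ℂ)) * (X - C (-1))) * (X - C Complex.I)) * (X - C (-Complex.I))
      = (X:ℂ[X])^4 - 1 := by
    calc (((X - C (1:ℂ)) * (X - C (-1))) * (X - C Complex.I)) * (X - C (-Complex.I))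
        = ((X - C (1:ℂ)) * (X - C (-1))) * ((X - C Complex.I) * (X - C (-Complex.I))) := by
          ring
      _ = (X^2 - 1) * (X^2 + 1) := by rw [e1, e2]
      _ = (X:ℂ[X])^4 - 1 := by ring
  have hdvd2 : (X:ℂ[X])^4 - 1 ∣ minpoly ℂ (dft N) := hP'eq ▸ h1234
  exact Polynomial.eq_of_monic_of_associated (minpoly.monic hint) hmon
    (associated_of_dvd_dvd hdvd hdvd2)

theorem stmt15 (n : ℕ) (hn : 3 ≤ n) :
    minpoly ℂ (dft (2 ^ n)) = X ^ 4 - 1 := by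
  apply minpoly_dft
  calc (8:ℕ) = 2^3 := rfl
    _ ≤ 2^n := Nat.pow_le_pow_right (by norm_num) hn
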